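/- Let T, Ω > 0, let 𝔍(ω) = (ω³/Ω²) e^{−ω/Ω}, and let C(T, 𝔍; t) = ∫_0^∞ 𝔍(ω) [ e^{iωt}/(e^{ω/T} − 1) + e^{−iωt} (1/(e^{ω/T} − 1) + 1) ] dω. Then ∫_0^∞ t |C(T, 𝔍; t)| dt ≤ 3 + π² T²/Ω²; in particular the bath correlation timescale τ_B(T, 𝔍) = 4 τ_R(T, 𝔍) ∫_0^∞ t |C(T, 𝔍; t)| dt is finite for every finite temperature T. -/

import Mathlib

open MeasureTheory

noncomputable section

open Set Filter

/-- The super-Ohmic (`s = 3`) spectral density with exponential cutoff,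
`𝔍(ω) = ω³/Ω² · e^{−ω/Ω}`. -/
def Jspec (Ω ω : ℝ) : ℝ := ω ^ 3 / Ω ^ 2 * Real.exp (-ω / Ω)

/-- The bath correlation function
`C(T,𝔍;t) = ∫_0^∞ 𝔍(ω)[e^{iωt}/(e^{ω/T}−1) + e^{−iωt}(1/(e^{ω/T}−1)+1)] dω`. -/
def bathCorr (T Ω t : ℝ) : ℂ :=
  ∫ ω in Set.Ioi (0 : ℝ), (Jspec Ω ω : ℂ) *
    (Complex.exp (Complex.I * (ω : ℂ) * (t : ℂ)) / (Complex.exp ((ω : ℂ) / (T : ℂ)) - 1) +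
      Complex.exp (-(Complex.I * (ω : ℂ) * (t : ℂ))) *
        (1 / (Complex.exp ((ω : ℂ) / (T : ℂ)) - 1) + 1))


-- norm of integrand
lemma norm_aux (z : ℂ) {ω : ℝ} (hω : 0 ≤ ω) :
    ‖(ω:ℂ)^3 * Complex.exp (-(z*ω))‖ = ω^3 * Real.exp (-(z.re*ω)) := by
  rw [norm_mul, norm_pow, Complex.norm_exp,
    Complex.norm_real, Real.norm_of_nonneg hω]
  congr 1
  simp [Complex.mul_re]

lemma integrableOn_real3 {b : ℝ} (hb : 0 < b) :
    IntegrableOn (fun ω : ℝ => ω^3 * Real.exp (-(b*ω))) (Ioi 0) := by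
  have hb' : IntegrableOn (fun x:ℝ => x ^ (3:ℝ) * Real.exp (-b * x ^ (1:ℝ))) (Ioi 0) :=
    integrableOn_rpow_mul_exp_neg_mul_rpow (by norm_num) zero_lt_one hb
  refine hb'.congr_fun (fun x hx => ?_) measurableSet_Ioi
  dsimp only
  rw [Real.rpow_one, show (3:ℝ) = ((3:ℕ):ℝ) by norm_num, Real.rpow_natCast]
  ring_nf

lemma integrableOn_cexp3 {z : ℂ} (hz : 0 < z.re) :
    IntegrableOn (fun ω : ℝ => (ω:ℂ)^3 * Complex.exp (-(z*ω))) (Ioi 0) := by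
  refine Integrable.mono' (integrableOn_real3 hz) ?_ ?_
  · exact (Continuous.aestronglyMeasurable (by continuity))
  · filter_upwards [ae_restrict_mem measurableSet_Ioi] with ω hω
    rw [norm_aux z (le_of_lt hω)]

lemma real_lap3 {b : ℝ} (hb : 0 < b) :
    ∫ ω in Ioi (0:ℝ), ω^3 * Real.exp (-(b*ω)) = 6/b^4 := by
  have h := Real.integral_rpow_mul_exp_neg_mul_Ioi (a := 4) (by norm_num) hb
  have he : ∀ x ∈ Ioi (0:ℝ), x ^ ((4:ℝ) - 1) * Real.exp (-(b*x)) = x^3 * Real.exp (-(b*x)) := by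
    intro x hx
    rw [show (4:ℝ)-1 = ((3:ℕ):ℝ) by norm_num, Real.rpow_natCast]
  rw [setIntegral_congr_fun measurableSet_Ioi he] at h
  rw [h, show (4:ℝ) = ((3:ℕ):ℝ)+1 by norm_num, Real.Gamma_nat_eq_factorial,
    show ((3:ℕ):ℝ)+1 = ((4:ℕ):ℝ) by norm_num, Real.rpow_natCast]
  have : b ≠ 0 := ne_of_gt hb
  field_simp
  norm_num [Nat.factorial]

open Filter

lemma tendsto_pow_mul_exp' (n : ℕ) {b : ℝ} (hb : 0 < b) :
    Tendsto (fun x:ℝ => x^n * Real.exp (-(b*x))) atTop (nhds 0) := by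
  have hcomp : Tendsto (fun x:ℝ => (b*x)^n * Real.exp (-(b*x))) atTop (nhds 0) :=
    (Real.tendsto_pow_mul_exp_neg_atTop_nhds_zero n).comp (tendsto_id.const_mul_atTop hb)
  have heq : (fun x:ℝ => x^n * Real.exp (-(b*x)))
      = fun x => (1/b^n) * ((b*x)^n * Real.exp (-(b*x))) := by
    funext x
    field_simp
    ring
  rw [heq]
  simpa using hcomp.const_mul (1/b^n)

lemma lap3 {z : ℂ} (hz : 0 < z.re) :
    ∫ ω in Ioi (0:ℝ), (ω:ℂ)^3 * Complex.exp (-(z*ω)) = 6 / z^4 := by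
  have hz0 : z ≠ 0 := fun h => by simp [h] at hz
  set G : ℂ → ℂ := fun w =>
    -(Complex.exp (-(z*w)) * (w^3*z^3 + 3*w^2*z^2 + 6*w*z + 6)) / z^4 with hG
  have hGd : ∀ w : ℂ, HasDerivAt G (w^3 * Complex.exp (-(z*w))) w := by
    intro w
    have hexp : HasDerivAt (fun w:ℂ => Complex.exp (-(z*w))) (Complex.exp (-(z*w)) * (-z)) w := by
      have h0 : HasDerivAt (fun w:ℂ => -(z*w)) (-z) w := by
        simpa [Pi.neg_def] using ((hasDerivAt_id w).const_mul z).neg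
      exact h0.cexp
    have h3 : HasDerivAt (fun w:ℂ => w^3*z^3) (3*w^2*z^3) w := by
      have h := (hasDerivAt_pow 3 w).mul_const (z^3)
      refine h.congr_deriv ?_
      all_goals (push_cast; ring)
    have h2 : HasDerivAt (fun w:ℂ => 3*w^2*z^2) (6*w*z^2) w := by
      have h := ((hasDerivAt_pow 2 w).const_mul (3:ℂ)).mul_const (z^2)
      refine h.congr_deriv ?_
      all_goals (push_cast; ring)
    have h1 : HasDerivAt (fun w:ℂ => 6*w*z + 6) (6*z) w := by
      have h := (((hasDerivAt_id w).const_mul (6:ℂ)).mul_const z).add_const (6:ℂ)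
      refine h.congr_deriv ?_
      all_goals (push_cast; ring)
    have hq : HasDerivAt (fun w:ℂ => w^3*z^3 + 3*w^2*z^2 + 6*w*z + 6)
        (3*w^2*z^3 + 6*w*z^2 + 6*z) w := by
      simpa [add_assoc, Pi.add_def] using (h3.add h2).add h1
    have h := ((hexp.mul hq).neg).div_const (z^4)
    refine h.congr_deriv ?_
    field_simp
    ring
  set F : ℝ → ℂ := fun ω => G ω with hF
  have hderiv : ∀ ω ∈ Ioi (0:ℝ), HasDerivAt F ((ω:ℂ)^3 * Complex.exp (-(z*ω))) ω :=
    fun ω _ => (hGd ω).comp_ofReal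
  set B : ℝ → ℝ := fun ω => Real.exp (-(z.re*ω)) *
      (ω^3*‖z‖^3 + 3*ω^2*‖z‖^2 + 6*ω*‖z‖ + 6) / ‖z‖^4 with hB
  have hnz : (0:ℝ) < ‖z‖ := norm_pos_iff.mpr hz0
  have he : ∀ ω : ℝ, ‖Complex.exp (-(z*(ω:ℂ)))‖ = Real.exp (-(z.re*ω)) := by
    intro ω
    rw [Complex.norm_exp]
    congr 1
    simp [Complex.mul_re]
  have hbound : ∀ᶠ ω in atTop, ‖F ω‖ ≤ B ω := by
    filter_upwards [eventually_ge_atTop (0:ℝ)] with ω hω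
    rw [hF, hG, hB]
    simp only [norm_div, norm_neg, norm_mul, norm_pow]
    rw [he ω]
    gcongr
    refine le_trans (norm_add_le _ _) ?_
    gcongr
    · refine le_trans (norm_add_le _ _) ?_
      gcongr
      · refine le_trans (norm_add_le _ _) ?_
        gcongr
        · apply le_of_eq
          simp [norm_mul, norm_pow, Complex.norm_real, Real.norm_of_nonneg hω, abs_of_nonneg hω]
        · apply le_of_eq
          simp [norm_mul, norm_pow, Complex.norm_real, Real.norm_of_nonneg hω, abs_of_nonneg hω]
      · apply le_of_eq
        simp [norm_mul, Complex.norm_real, Real.norm_of_nonneg hω, abs_of_nonneg hω]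
    · apply le_of_eq
      norm_num
  have htB : Tendsto B atTop (nhds 0) := by
    have h3 := (tendsto_pow_mul_exp' 3 hz).mul_const (‖z‖^3)
    have h2 := ((tendsto_pow_mul_exp' 2 hz).mul_const (‖z‖^2)).const_mul (3:ℝ)
    have h1 := ((tendsto_pow_mul_exp' 1 hz).mul_const ‖z‖).const_mul (6:ℝ)
    have h0 := (tendsto_pow_mul_exp' 0 hz).const_mul (6:ℝ)
    have hsum := (((h3.add h2).add h1).add h0).div_const (‖z‖^4)
    simp only [mul_zero, zero_mul, add_zero, zero_div] at hsum
    convert hsum using 2 with ω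
    rw [hB]
    ring
  have htend : Tendsto F atTop (nhds 0) := squeeze_zero_norm' hbound htB
  have hcont : ContinuousWithinAt F (Ici 0) 0 :=
    ((hGd 0).comp_ofReal).continuousAt.continuousWithinAt
  have hint := integral_Ioi_of_hasDerivAt_of_tendsto hcont hderiv (integrableOn_cexp3 hz) htend
  rw [hint, hF, hG]
  norm_num
  ring

lemma hasDerivAt_invsq (a : ℝ) (ha : 0 < a) (t : ℝ) :
    HasDerivAt (fun t : ℝ => -(2*(a^2+t^2))⁻¹) (t * ((a^2+t^2)^2)⁻¹) t := by
  have hpos : (0:ℝ) < a^2 + t^2 := by positivity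
  have h1 : HasDerivAt (fun t:ℝ => 2*(a^2+t^2)) (2*(2*t)) t := by
    have h := ((hasDerivAt_pow 2 t).const_add (a^2)).const_mul (2:ℝ)
    refine h.congr_deriv ?_
    push_cast
    ring
  have h2 := (h1.inv (by positivity)).neg
  refine h2.congr_deriv ?_
  have : (0:ℝ) < (2*(a^2+t^2))^2 := by positivity
  field_simp

lemma int_t_integrable {a : ℝ} (ha : 0 < a) :
    IntegrableOn (fun t : ℝ => t * ((a^2+t^2)^2)⁻¹) (Ioi 0) := by
  refine integrableOn_Ioi_deriv_of_nonneg
    ((hasDerivAt_invsq a ha 0).continuousAt.continuousWithinAt)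
    (fun x _ => hasDerivAt_invsq a ha x) (fun x hx => by have hx' : (0:ℝ) < x := hx; positivity) (l := 0) ?_
  have h : Filter.Tendsto (fun t:ℝ => 2*(a^2+t^2)) Filter.atTop Filter.atTop := by
    apply Filter.tendsto_atTop_mono (fun t => ?_) (Filter.tendsto_pow_atTop (n := 2) two_ne_zero)
    nlinarith [sq_nonneg a]
  simpa using (h.inv_tendsto_atTop).neg

lemma int_t_val {a : ℝ} (ha : 0 < a) :
    ∫ t in Ioi (0:ℝ), t * ((a^2+t^2)^2)⁻¹ = (2*a^2)⁻¹ := by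
  have h := integral_Ioi_of_hasDerivAt_of_nonneg
    ((hasDerivAt_invsq a ha 0).continuousAt.continuousWithinAt)
    (fun x _ => hasDerivAt_invsq a ha x) (fun x hx => by have hx' : (0:ℝ) < x := hx; positivity) (l := 0) ?_
  · rw [h]
    norm_num
  · have h : Filter.Tendsto (fun t:ℝ => 2*(a^2+t^2)) Filter.atTop Filter.atTop := by
      apply Filter.tendsto_atTop_mono (fun t => ?_) (Filter.tendsto_pow_atTop (n := 2) two_ne_zero)
      nlinarith [sq_nonneg a]
    simpa using (h.inv_tendsto_atTop).neg


noncomputable def aK (T Ω : ℝ) : ℕ → ℝ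
  | 0 => 1/Ω
  | (k+1) => 1/Ω + ((k:ℝ)+1)/T

noncomputable def cK : ℕ → ℝ
  | 0 => 1
  | _+1 => 2

noncomputable def Fk (T Ω t : ℝ) : ℕ → ℝ → ℂ
  | 0, ω => ((Ω:ℂ)^2)⁻¹ *
      ((ω:ℂ)^3 * Complex.exp (-((((1/Ω : ℝ):ℂ) + Complex.I*(t:ℂ)) * (ω:ℂ))))
  | (k+1), ω => ((Ω:ℂ)^2)⁻¹ *
      ((ω:ℂ)^3 * Complex.exp (-((((1/Ω + ((k:ℝ)+1)/T : ℝ):ℂ) - Complex.I*(t:ℂ)) * (ω:ℂ))) +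
       (ω:ℂ)^3 * Complex.exp (-((((1/Ω + ((k:ℝ)+1)/T : ℝ):ℂ) + Complex.I*(t:ℂ)) * (ω:ℂ))))

noncomputable def Ik (T Ω t : ℝ) : ℕ → ℂ
  | 0 => ((Ω:ℂ)^2)⁻¹ * (6 / ((((1/Ω : ℝ):ℂ) + Complex.I*(t:ℂ))^4))
  | (k+1) => ((Ω:ℂ)^2)⁻¹ *
      (6 / ((((1/Ω + ((k:ℝ)+1)/T : ℝ):ℂ) - Complex.I*(t:ℂ))^4) +
       6 / ((((1/Ω + ((k:ℝ)+1)/T : ℝ):ℂ) + Complex.I*(t:ℂ))^4))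

noncomputable def gk (T Ω : ℝ) (k : ℕ) (t : ℝ) : ℝ :=
  cK k * (6/Ω^2) * (((aK T Ω k)^2+t^2)^2)⁻¹

section Main
variable {T Ω : ℝ}

lemma aK_pos (hT : 0 < T) (hΩ : 0 < Ω) : ∀ k, 0 < aK T Ω k := by
  intro k
  cases k with
  | zero => simp only [aK]; exact one_div_pos.mpr hΩ
  | succ k =>
    simp only [aK]
    have h1 : (0:ℝ) < ((k:ℝ)+1)/T := div_pos (by positivity) hT
    have h2 : (0:ℝ) < 1/Ω := one_div_pos.mpr hΩ
    linarith

lemma pointwise_eq (hT : 0 < T) (hΩ : 0 < Ω) (t : ℝ) {ω : ℝ} (hω : 0 < ω) :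
    (Jspec Ω ω : ℂ) *
    (Complex.exp (Complex.I * (ω : ℂ) * (t : ℂ)) / (Complex.exp ((ω : ℂ) / (T : ℂ)) - 1) +
      Complex.exp (-(Complex.I * (ω : ℂ) * (t : ℂ))) *
        (1 / (Complex.exp ((ω : ℂ) / (T : ℂ)) - 1) + 1))
    = ∑' k, Fk T Ω t k ω := by
  set E : ℂ := Complex.exp ((ω:ℂ)/(T:ℂ)) with hE
  set q : ℂ := Complex.exp (((-(ω/T)):ℝ):ℂ) with hq
  set P : ℂ := Complex.exp (Complex.I * (ω:ℂ) * (t:ℂ)) with hP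
  set M : ℂ := Complex.exp (-(Complex.I * (ω:ℂ) * (t:ℂ))) with hM
  set A : ℂ := ((Ω:ℂ)^2)⁻¹ * ((ω:ℂ)^3 * Complex.exp (((-(ω/Ω)):ℝ):ℂ)) * (P + M) with hA
  have hqlt : ‖q‖ < 1 := by
    rw [hq, Complex.norm_exp]
    simp only [Complex.ofReal_re]
    rw [show (1:ℝ) = Real.exp 0 by simp, Real.exp_lt_exp]
    have : 0 < ω/T := div_pos hω hT
    linarith
  have hFk1 : ∀ k : ℕ, Fk T Ω t (k+1) ω = A * q^(k+1) := by
    intro k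
    have e1 : Complex.exp (-((((1/Ω + ((k:ℝ)+1)/T : ℝ):ℂ) - Complex.I*(t:ℂ)) * (ω:ℂ)))
        = Complex.exp (((-(ω/Ω)):ℝ):ℂ) * P * q^(k+1) := by
      rw [hq, hP, ← Complex.exp_nat_mul, ← Complex.exp_add, ← Complex.exp_add]
      congr 1
      push_cast
      ring
    have e2 : Complex.exp (-((((1/Ω + ((k:ℝ)+1)/T : ℝ):ℂ) + Complex.I*(t:ℂ)) * (ω:ℂ)))
        = Complex.exp (((-(ω/Ω)):ℝ):ℂ) * M * q^(k+1) := by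
      rw [hq, hM, ← Complex.exp_nat_mul, ← Complex.exp_add, ← Complex.exp_add]
      congr 1
      push_cast
      ring
    simp only [Fk]
    rw [e1, e2, hA]
    ring
  have hgeom : Summable (fun k : ℕ => q^k) := summable_geometric_of_norm_lt_one hqlt
  have hpow : (fun k:ℕ => q^(k+1)) = fun k => q^k * q := by
    funext k
    rw [pow_succ]
  have hs1 : Summable (fun n : ℕ => Fk T Ω t (n+1) ω) := by
    simp only [hFk1]
    refine Summable.mul_left A ?_
    have h := hgeom.mul_right q
    rwa [← hpow] at h
  have hs : Summable (fun k : ℕ => Fk T Ω t k ω) := (summable_nat_add_iff 1).mp hs1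
  have htsum : ∑' k, Fk T Ω t k ω = Fk T Ω t 0 ω + A * (q * (1-q)⁻¹) := by
    rw [Summable.tsum_eq_zero_add hs]
    congr 1
    simp only [hFk1]
    rw [tsum_mul_left]
    congr 1
    rw [hpow, tsum_mul_right, tsum_geometric_of_norm_lt_one hqlt]
    ring
  rw [htsum]
  -- remaining: algebraic identity
  have hqE : q = E⁻¹ := by
    rw [hq, hE, ← Complex.exp_neg]
    congr 1
    push_cast
    ring
  have hE0 : E ≠ 0 := Complex.exp_ne_zero _
  have hE1 : E - 1 ≠ 0 := by
    rw [hE, sub_ne_zero]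
    have : Complex.exp ((ω:ℂ)/(T:ℂ)) = ((Real.exp (ω/T) : ℝ) : ℂ) := by
      rw [Complex.ofReal_exp]
      congr 1
      push_cast
      ring
    rw [this]
    intro h
    have h2 : Real.exp (ω/T) = 1 := by exact_mod_cast h
    have : 0 < ω/T := div_pos hω hT
    nlinarith [Real.add_one_lt_exp (ne_of_gt this)]
  have hq1 : (1:ℂ) - q ≠ 0 := by
    intro h
    have : q = 1 := by linear_combination -h
    rw [this] at hqlt
    simp at hqlt
  have hsplit : (1:ℂ) - E⁻¹ = (E-1) * E⁻¹ := by
    field_simp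
  have hqq : q * (1-q)⁻¹ = (E-1)⁻¹ := by
    rw [hqE, hsplit, mul_inv, inv_inv]
    field_simp
  have e0 : Fk T Ω t 0 ω = ((Ω:ℂ)^2)⁻¹ * ((ω:ℂ)^3 * (Complex.exp (((-(ω/Ω)):ℝ):ℂ) * M)) := by
    simp only [Fk]
    rw [hM, ← Complex.exp_add]
    congr 2
    push_cast
    ring
  have hJ : ((Jspec Ω ω : ℝ) : ℂ)
      = (ω:ℂ)^3/(Ω:ℂ)^2 * Complex.exp (((-(ω/Ω)):ℝ):ℂ) := by
    rw [Jspec, neg_div]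
    push_cast [Complex.ofReal_exp]
    ring
  rw [hqq, hJ, e0, hA]
  ring

end Main

lemma re_plus (a t : ℝ) : (((a:ℝ):ℂ) + Complex.I*(t:ℂ)).re = a := by simp

lemma re_minus (a t : ℝ) : (((a:ℝ):ℂ) - Complex.I*(t:ℂ)).re = a := by simp

lemma norm4_plus (a t : ℝ) : ‖(((a:ℝ):ℂ) + Complex.I*(t:ℂ))^4‖ = (a^2+t^2)^2 := by
  have hsq : Complex.normSq (((a:ℝ):ℂ) + Complex.I*(t:ℂ)) = a^2+t^2 := by
    simp [Complex.normSq_apply]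
    ring
  rw [norm_pow, show (4:ℕ) = 2*2 from rfl, pow_mul, Complex.sq_norm, hsq]

lemma norm4_minus (a t : ℝ) : ‖(((a:ℝ):ℂ) - Complex.I*(t:ℂ))^4‖ = (a^2+t^2)^2 := by
  have hsq : Complex.normSq (((a:ℝ):ℂ) - Complex.I*(t:ℂ)) = a^2+t^2 := by
    simp [Complex.normSq_apply]
    ring
  rw [norm_pow, show (4:ℕ) = 2*2 from rfl, pow_mul, Complex.sq_norm, hsq]

section Main2
variable {T Ω : ℝ}

lemma aK_re_plus (k : ℕ) (t : ℝ) (hT : 0 < T) (hΩ : 0 < Ω) :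
    0 < ((((aK T Ω k):ℝ):ℂ) + Complex.I*(t:ℂ)).re := by
  rw [re_plus]
  exact aK_pos hT hΩ k

lemma integrableOn_Fk (hT : 0 < T) (hΩ : 0 < Ω) (t : ℝ) (k : ℕ) :
    MeasureTheory.IntegrableOn (Fk T Ω t k) (Ioi 0) := by
  cases k with
  | zero =>
    have hfe : Fk T Ω t 0 = fun ω : ℝ => ((Ω:ℂ)^2)⁻¹ *
        ((ω:ℂ)^3 * Complex.exp (-((((1/Ω : ℝ):ℂ) + Complex.I*(t:ℂ)) * (ω:ℂ)))) := rfl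
    rw [hfe]
    exact (integrableOn_cexp3 (by rw [re_plus]; exact one_div_pos.mpr hΩ)).const_mul _
  | succ k =>
    have hfe : Fk T Ω t (k+1) = fun ω : ℝ => ((Ω:ℂ)^2)⁻¹ *
      ((ω:ℂ)^3 * Complex.exp (-((((1/Ω + ((k:ℝ)+1)/T : ℝ):ℂ) - Complex.I*(t:ℂ)) * (ω:ℂ))) +
       (ω:ℂ)^3 * Complex.exp (-((((1/Ω + ((k:ℝ)+1)/T : ℝ):ℂ) + Complex.I*(t:ℂ)) * (ω:ℂ)))) := rfl
    rw [hfe]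
    have h1 : (0:ℝ) < 1/Ω + ((k:ℝ)+1)/T :=
      add_pos (one_div_pos.mpr hΩ) (div_pos (by positivity) hT)
    exact ((integrableOn_cexp3 (by rw [re_minus]; exact h1)).add
      (integrableOn_cexp3 (by rw [re_plus]; exact h1))).const_mul _

lemma integral_Fk (hT : 0 < T) (hΩ : 0 < Ω) (t : ℝ) (k : ℕ) :
    ∫ ω in Ioi (0:ℝ), Fk T Ω t k ω = Ik T Ω t k := by
  cases k with
  | zero =>
    simp only [Fk, Ik]
    rw [MeasureTheory.integral_const_mul, lap3 (by rw [re_plus]; exact one_div_pos.mpr hΩ)]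
  | succ k =>
    simp only [Fk, Ik]
    have h1 : (0:ℝ) < 1/Ω + ((k:ℝ)+1)/T :=
      add_pos (one_div_pos.mpr hΩ) (div_pos (by positivity) hT)
    rw [MeasureTheory.integral_const_mul,
      MeasureTheory.integral_add (integrableOn_cexp3 (by rw [re_minus]; exact h1))
        (integrableOn_cexp3 (by rw [re_plus]; exact h1)),
      lap3 (by rw [re_minus]; exact h1), lap3 (by rw [re_plus]; exact h1)]

lemma norm_Ik_le (hT : 0 < T) (hΩ : 0 < Ω) (t : ℝ) (k : ℕ) :
    ‖Ik T Ω t k‖ ≤ gk T Ω k t := by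
  have hΩn : ‖((Ω:ℂ)^2)⁻¹‖ = (Ω^2)⁻¹ := by
    rw [norm_inv, norm_pow, Complex.norm_real, Real.norm_of_nonneg hΩ.le]
  cases k with
  | zero =>
    simp only [Ik, gk, cK, aK]
    rw [norm_mul, hΩn, norm_div, norm4_plus]
    apply le_of_eq
    have : ‖(6:ℂ)‖ = 6 := by norm_num
    rw [this]
    ring
  | succ k =>
    simp only [Ik, gk, cK, aK]
    rw [norm_mul, hΩn]
    refine le_trans (mul_le_mul_of_nonneg_left (norm_add_le _ _) (by positivity)) ?_
    rw [norm_div, norm_div, norm4_plus, norm4_minus]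
    apply le_of_eq
    have : ‖(6:ℂ)‖ = 6 := by norm_num
    rw [this]
    ring

lemma hasSum_succ_sq : HasSum (fun k:ℕ => 1/((k:ℝ)+1)^2) (Real.pi^2/6) := by
  have h := (hasSum_nat_add_iff' (f := fun n:ℕ => 1/((n:ℝ))^2) 1).mpr hasSum_zeta_two
  simp only [Finset.range_one, Finset.sum_singleton, Nat.cast_zero] at h
  norm_num at h
  simpa only [one_div] using h

lemma summable_inv_aK4 (hT : 0 < T) (hΩ : 0 < Ω) :
    Summable (fun k : ℕ => ((aK T Ω k)^4)⁻¹) := by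
  apply (summable_nat_add_iff 1).mp
  apply Summable.of_nonneg_of_le (fun k => by positivity)
    (fun k => ?_) ((hasSum_succ_sq.summable).mul_left (T^4))
  have h2 : (0:ℝ) < ((k:ℝ)+1)/T := div_pos (by positivity) hT
  have h1 : ((k:ℝ)+1)/T ≤ aK T Ω (k+1) := by
    simp only [aK]
    have : (0:ℝ) ≤ 1/Ω := (one_div_pos.mpr hΩ).le
    linarith
  have h3 : (((k:ℝ)+1)/T)^4 ≤ (aK T Ω (k+1))^4 := pow_le_pow_left₀ h2.le h1 4
  calc ((aK T Ω (k+1))^4)⁻¹ ≤ ((((k:ℝ)+1)/T)^4)⁻¹ := by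
        apply inv_anti₀ (by positivity) h3
    _ = T^4/((k:ℝ)+1)^4 := by
        rw [div_pow, inv_div]
    _ ≤ T^4/((k:ℝ)+1)^2 := by
        have h0 : (0:ℝ) ≤ (k:ℝ) := Nat.cast_nonneg k
        have h1k : (1:ℝ) ≤ (k:ℝ)+1 := by linarith
        exact div_le_div_of_nonneg_left (by positivity) (by positivity)
          (pow_le_pow_right₀ h1k (by norm_num))
    _ = T^4 * (1/((k:ℝ)+1)^2) := by ring

lemma gk_nonneg (k : ℕ) (t : ℝ) : 0 ≤ gk T Ω k t := by
  cases k with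
  | zero => simp only [gk, cK]; positivity
  | succ k => simp only [gk, cK]; positivity

lemma gk_le_inv4 (hT : 0 < T) (hΩ : 0 < Ω) (k : ℕ) (t : ℝ) :
    gk T Ω k t ≤ (12/Ω^2) * ((aK T Ω k)^4)⁻¹ := by
  have ha := aK_pos hT hΩ k
  have hinv : (((aK T Ω k)^2+t^2)^2)⁻¹ ≤ ((aK T Ω k)^4)⁻¹ := by
    apply inv_anti₀ (by positivity)
    calc (aK T Ω k)^4 = ((aK T Ω k)^2)^2 := by ring
      _ ≤ ((aK T Ω k)^2+t^2)^2 := by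
          apply pow_le_pow_left₀ (by positivity)
          nlinarith [sq_nonneg t]
  have hcK : cK k ≤ 2 := by cases k <;> simp [cK] <;> norm_num
  have hcK0 : 0 ≤ cK k := by cases k <;> simp [cK] <;> norm_num
  calc gk T Ω k t = cK k * (6/Ω^2) * (((aK T Ω k)^2+t^2)^2)⁻¹ := rfl
    _ ≤ 2 * (6/Ω^2) * ((aK T Ω k)^4)⁻¹ := by
        apply mul_le_mul (by apply mul_le_mul_of_nonneg_right hcK ; positivity) hinv
          (by positivity) (by positivity)
    _ = (12/Ω^2) * ((aK T Ω k)^4)⁻¹ := by ring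

lemma summable_gk (hT : 0 < T) (hΩ : 0 < Ω) (t : ℝ) :
    Summable (fun k => gk T Ω k t) :=
  Summable.of_nonneg_of_le (fun k => gk_nonneg k t) (fun k => gk_le_inv4 hT hΩ k t)
    ((summable_inv_aK4 hT hΩ).mul_left _)

end Main2


noncomputable def wB (T Ω : ℝ) : ℕ → ℝ
  | 0 => 3
  | (k+1) => 6*T^2/Ω^2 * (1/((k:ℝ)+1)^2)

section Main3
variable {T Ω : ℝ}

lemma norm_Fk_le (hT : 0 < T) (hΩ : 0 < Ω) (t : ℝ) (k : ℕ) {ω : ℝ} (hω : 0 < ω) :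
    ‖Fk T Ω t k ω‖ ≤ 2*(Ω^2)⁻¹ * (ω^3 * Real.exp (-(aK T Ω k * ω))) := by
  have hΩn : ‖((Ω:ℂ)^2)⁻¹‖ = (Ω^2)⁻¹ := by
    rw [norm_inv, norm_pow, Complex.norm_real, Real.norm_of_nonneg hΩ.le]
  cases k with
  | zero =>
    have hfe : Fk T Ω t 0 ω = ((Ω:ℂ)^2)⁻¹ *
        ((ω:ℂ)^3 * Complex.exp (-((((1/Ω : ℝ):ℂ) + Complex.I*(t:ℂ)) * (ω:ℂ)))) := rfl
    rw [hfe, norm_mul, hΩn, norm_aux _ hω.le, re_plus]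
    have h1 : aK T Ω 0 = 1/Ω := rfl
    rw [h1]
    nlinarith [mul_nonneg (pow_nonneg hω.le 3) (Real.exp_pos (-(1/Ω*ω))).le,
      inv_nonneg.mpr (sq_nonneg Ω)]
  | succ k =>
    have hfe : Fk T Ω t (k+1) ω = ((Ω:ℂ)^2)⁻¹ *
      ((ω:ℂ)^3 * Complex.exp (-((((1/Ω + ((k:ℝ)+1)/T : ℝ):ℂ) - Complex.I*(t:ℂ)) * (ω:ℂ))) +
       (ω:ℂ)^3 * Complex.exp (-((((1/Ω + ((k:ℝ)+1)/T : ℝ):ℂ) + Complex.I*(t:ℂ)) * (ω:ℂ)))) := rfl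
    rw [hfe, norm_mul, hΩn]
    have h1 : aK T Ω (k+1) = 1/Ω + ((k:ℝ)+1)/T := rfl
    rw [h1]
    refine le_trans (mul_le_mul_of_nonneg_left (norm_add_le _ _) (by positivity)) ?_
    rw [norm_aux _ hω.le, norm_aux _ hω.le, re_plus, re_minus]
    apply le_of_eq
    ring

lemma integral_norm_Fk_le (hT : 0 < T) (hΩ : 0 < Ω) (t : ℝ) (k : ℕ) :
    ∫ ω in Ioi (0:ℝ), ‖Fk T Ω t k ω‖ ≤ (12/Ω^2) * ((aK T Ω k)^4)⁻¹ := by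
  have ha := aK_pos hT hΩ k
  have hint : MeasureTheory.IntegrableOn
      (fun ω:ℝ => 2*(Ω^2)⁻¹ * (ω^3 * Real.exp (-(aK T Ω k * ω)))) (Ioi 0) :=
    (integrableOn_real3 ha).const_mul _
  refine le_trans (MeasureTheory.integral_mono_of_nonneg ?_ hint ?_) ?_
  · filter_upwards with ω using norm_nonneg _
  · filter_upwards [MeasureTheory.ae_restrict_mem measurableSet_Ioi] with ω hω
    exact norm_Fk_le hT hΩ t k hω
  · rw [MeasureTheory.integral_const_mul, real_lap3 ha]
    apply le_of_eq
    field_simp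
    ring

lemma summable_integral_norm_Fk (hT : 0 < T) (hΩ : 0 < Ω) (t : ℝ) :
    Summable (fun k => ∫ ω in Ioi (0:ℝ), ‖Fk T Ω t k ω‖) :=
  Summable.of_nonneg_of_le
    (fun k => MeasureTheory.integral_nonneg (fun ω => norm_nonneg _))
    (fun k => integral_norm_Fk_le hT hΩ t k)
    ((summable_inv_aK4 hT hΩ).mul_left _)

lemma bathCorr_rep (hT : 0 < T) (hΩ : 0 < Ω) (t : ℝ) :
    bathCorr T Ω t = ∑' k, Ik T Ω t k := by
  rw [bathCorr,
    MeasureTheory.setIntegral_congr_fun measurableSet_Ioi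
      (fun ω hω => pointwise_eq hT hΩ t hω),
    ← MeasureTheory.integral_tsum_of_summable_integral_norm
      (fun k => integrableOn_Fk hT hΩ t k) (summable_integral_norm_Fk hT hΩ t)]
  exact tsum_congr (fun k => integral_Fk hT hΩ t k)

lemma summable_norm_Ik (hT : 0 < T) (hΩ : 0 < Ω) (t : ℝ) :
    Summable (fun k => ‖Ik T Ω t k‖) :=
  Summable.of_nonneg_of_le (fun k => norm_nonneg _) (fun k => norm_Ik_le hT hΩ t k)
    (summable_gk hT hΩ t)

lemma norm_bathCorr_le (hT : 0 < T) (hΩ : 0 < Ω) (t : ℝ) :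
    ‖bathCorr T Ω t‖ ≤ ∑' k, gk T Ω k t := by
  rw [bathCorr_rep hT hΩ t]
  exact le_trans (norm_tsum_le_tsum_norm (summable_norm_Ik hT hΩ t))
    (Summable.tsum_le_tsum (fun k => norm_Ik_le hT hΩ t k) (summable_norm_Ik hT hΩ t)
      (summable_gk hT hΩ t))

lemma ne_zero_plus {a : ℝ} (ha : 0 < a) (t : ℝ) : ((a:ℝ):ℂ) + Complex.I*(t:ℂ) ≠ 0 := by
  intro h
  have h2 := congrArg Complex.re h
  rw [re_plus] at h2
  simp at h2
  exact absurd h2 (ne_of_gt ha)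

lemma ne_zero_minus {a : ℝ} (ha : 0 < a) (t : ℝ) : ((a:ℝ):ℂ) - Complex.I*(t:ℂ) ≠ 0 := by
  intro h
  have h2 := congrArg Complex.re h
  rw [re_minus] at h2
  simp at h2
  exact absurd h2 (ne_of_gt ha)

lemma cont_Ik (hT : 0 < T) (hΩ : 0 < Ω) (k : ℕ) : Continuous (fun t => Ik T Ω t k) := by
  have hc : ∀ a : ℝ, Continuous (fun t : ℝ => ((a:ℝ):ℂ) + Complex.I*(t:ℂ)) := by
    intro a
    exact continuous_const.add (continuous_const.mul Complex.continuous_ofReal)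
  have hc' : ∀ a : ℝ, Continuous (fun t : ℝ => ((a:ℝ):ℂ) - Complex.I*(t:ℂ)) := by
    intro a
    exact continuous_const.sub (continuous_const.mul Complex.continuous_ofReal)
  cases k with
  | zero =>
    have h0 : (0:ℝ) < 1/Ω := one_div_pos.mpr hΩ
    have : Continuous (fun t : ℝ => ((Ω:ℂ)^2)⁻¹ *
        (6 / ((((1/Ω : ℝ):ℂ) + Complex.I*(t:ℂ))^4))) := by
      refine Continuous.mul continuous_const ?_
      exact continuous_const.div ((hc (1/Ω)).pow 4)
        (fun t => pow_ne_zero 4 (ne_zero_plus h0 t))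
    exact this
  | succ k =>
    have h1 : (0:ℝ) < 1/Ω + ((k:ℝ)+1)/T :=
      add_pos (one_div_pos.mpr hΩ) (div_pos (by positivity) hT)
    have : Continuous (fun t : ℝ => ((Ω:ℂ)^2)⁻¹ *
        (6 / ((((1/Ω + ((k:ℝ)+1)/T : ℝ):ℂ) - Complex.I*(t:ℂ))^4) +
         6 / ((((1/Ω + ((k:ℝ)+1)/T : ℝ):ℂ) + Complex.I*(t:ℂ))^4))) := by
      refine Continuous.mul continuous_const (Continuous.add ?_ ?_)
      · exact continuous_const.div ((hc' _).pow 4)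
          (fun t => pow_ne_zero 4 (ne_zero_minus h1 t))
      · exact continuous_const.div ((hc _).pow 4)
          (fun t => pow_ne_zero 4 (ne_zero_plus h1 t))
    exact this

lemma meas_bathCorr (hT : 0 < T) (hΩ : 0 < Ω) :
    Measurable (fun t => bathCorr T Ω t) := by
  have hsum : ∀ t, Summable (fun k => Ik T Ω t k) :=
    fun t => (summable_norm_Ik hT hΩ t).of_norm
  apply measurable_of_tendsto_metrizable
    (f := fun n => fun t => ∑ k ∈ Finset.range n, Ik T Ω t k)
    (fun n => (continuous_finset_sum _ (fun k _ => cont_Ik hT hΩ k)).measurable)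
  rw [tendsto_pi_nhds]
  intro t
  rw [bathCorr_rep hT hΩ t]
  exact (hsum t).hasSum.tendsto_sum_nat

lemma cont_gk (hT : 0 < T) (hΩ : 0 < Ω) (k : ℕ) : Continuous (fun t => gk T Ω k t) := by
  have ha := aK_pos hT hΩ k
  unfold gk
  refine Continuous.mul continuous_const (Continuous.inv₀ (by continuity) ?_)
  intro t
  positivity

lemma integral_t_gk (hT : 0 < T) (hΩ : 0 < Ω) (k : ℕ) :
    ∫ t in Ioi (0:ℝ), t * gk T Ω k t = 3 * cK k / (Ω^2 * (aK T Ω k)^2) := by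
  have ha := aK_pos hT hΩ k
  have hfe : (fun t:ℝ => t * gk T Ω k t)
      = fun t => (cK k * (6/Ω^2)) * (t * (((aK T Ω k)^2+t^2)^2)⁻¹) := by
    funext t
    unfold gk
    ring
  rw [hfe, MeasureTheory.integral_const_mul, int_t_val ha]
  field_simp
  ring

lemma integrable_t_gk (hT : 0 < T) (hΩ : 0 < Ω) (k : ℕ) :
    MeasureTheory.IntegrableOn (fun t:ℝ => t * gk T Ω k t) (Ioi 0) := by
  have ha := aK_pos hT hΩ k
  have hfe : (fun t:ℝ => t * gk T Ω k t)
      = fun t => (cK k * (6/Ω^2)) * (t * (((aK T Ω k)^2+t^2)^2)⁻¹) := by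
    funext t
    unfold gk
    ring
  rw [hfe]
  exact (int_t_integrable ha).const_mul _

lemma wB_nonneg (k : ℕ) : 0 ≤ wB T Ω k := by
  cases k with
  | zero => norm_num [wB]
  | succ k => simp only [wB]; positivity

lemma summable_wB : Summable (wB T Ω) := by
  apply (summable_nat_add_iff 1).mp
  have : (fun n : ℕ => wB T Ω (n+1)) = fun n : ℕ => 6*T^2/Ω^2 * (1/((n:ℝ)+1)^2) := by funext n; rfl
  rw [this]
  exact (hasSum_succ_sq.summable).mul_left _

lemma tsum_wB (hT : 0 < T) (hΩ : 0 < Ω) :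
    ∑' k, wB T Ω k = 3 + Real.pi^2*T^2/Ω^2 := by
  rw [Summable.tsum_eq_zero_add summable_wB]
  have h1 : wB T Ω 0 = 3 := rfl
  have h2 : (fun n : ℕ => wB T Ω (n+1)) = fun n : ℕ => 6*T^2/Ω^2 * (1/((n:ℝ)+1)^2) := by funext n; rfl
  rw [h1, h2, tsum_mul_left, hasSum_succ_sq.tsum_eq]
  field_simp

lemma v_le_wB (hT : 0 < T) (hΩ : 0 < Ω) (k : ℕ) :
    3 * cK k / (Ω^2 * (aK T Ω k)^2) ≤ wB T Ω k := by
  cases k with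
  | zero =>
    have h1 : aK T Ω 0 = 1/Ω := rfl
    have h2 : cK 0 = 1 := rfl
    rw [h1, h2, show wB T Ω 0 = 3 from rfl]
    apply le_of_eq
    field_simp
  | succ k =>
    have h2 : cK (k+1) = 2 := rfl
    have hkp : (0:ℝ) < ((k:ℝ)+1)/T := div_pos (by positivity) hT
    have h1 : ((k:ℝ)+1)/T ≤ aK T Ω (k+1) := by
      have h3 : aK T Ω (k+1) = 1/Ω + ((k:ℝ)+1)/T := rfl
      rw [h3]
      have : (0:ℝ) ≤ 1/Ω := (one_div_pos.mpr hΩ).le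
      linarith
    have ha := aK_pos hT hΩ (k+1)
    rw [h2, show wB T Ω (k+1) = 6*T^2/Ω^2 * (1/((k:ℝ)+1)^2) from rfl]
    have hsq : (((k:ℝ)+1)/T)^2 ≤ (aK T Ω (k+1))^2 := pow_le_pow_left₀ hkp.le h1 2
    calc 3 * 2 / (Ω^2 * (aK T Ω (k+1))^2)
        ≤ 3 * 2 / (Ω^2 * ((((k:ℝ)+1)/T)^2)) := by
          apply div_le_div_of_nonneg_left (by norm_num) (by positivity)
          exact mul_le_mul_of_nonneg_left hsq (by positivity)
      _ = 6*T^2/Ω^2 * (1/((k:ℝ)+1)^2) := by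
          field_simp
          ring

end Main3

/-- First-moment bound on the bath correlation function:
`∫_0^∞ t|C(T,𝔍;t)| dt ≤ 3 + π²T²/Ω²`; in particular the bath correlation timescale
`τ_B(T,𝔍) = 4τ_R(T,𝔍)∫_0^∞ t|C(T,𝔍;t)| dt` is finite at every finite temperature. -/
theorem integral_mul_abs_bathCorr_le (T Ω : ℝ) (hT : 0 < T) (hΩ : 0 < Ω) :
    (∫ t in Set.Ioi (0 : ℝ), t * ‖bathCorr T Ω t‖) ≤
      3 + Real.pi ^ 2 * T ^ 2 / Ω ^ 2 := by
  have hmeas : MeasureTheory.AEStronglyMeasurable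
      (fun t => t * ‖bathCorr T Ω t‖) (volume.restrict (Ioi 0)) := by
    exact (measurable_id.mul (meas_bathCorr hT hΩ).norm).aestronglyMeasurable
  have hnn : 0 ≤ᵐ[volume.restrict (Ioi (0:ℝ))]
      fun t => t * ‖bathCorr T Ω t‖ := by
    filter_upwards [MeasureTheory.ae_restrict_mem measurableSet_Ioi] with t ht
    exact mul_nonneg (le_of_lt ht) (norm_nonneg _)
  rw [MeasureTheory.integral_eq_lintegral_of_nonneg_ae hnn hmeas]
  refine ENNReal.toReal_le_of_le_ofReal (by positivity) ?_
  calc ∫⁻ t in Ioi (0:ℝ), ENNReal.ofReal (t * ‖bathCorr T Ω t‖)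
      ≤ ∫⁻ t in Ioi (0:ℝ), ∑' k, ENNReal.ofReal (t * gk T Ω k t) := by
        apply MeasureTheory.lintegral_mono_ae
        filter_upwards [MeasureTheory.ae_restrict_mem measurableSet_Ioi] with t ht
        have h1 : t * ‖bathCorr T Ω t‖ ≤ ∑' k, t * gk T Ω k t := by
          rw [tsum_mul_left]
          exact mul_le_mul_of_nonneg_left (norm_bathCorr_le hT hΩ t) (le_of_lt ht)
        calc ENNReal.ofReal (t * ‖bathCorr T Ω t‖)
            ≤ ENNReal.ofReal (∑' k, t * gk T Ω k t) := ENNReal.ofReal_le_ofReal h1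
          _ = ∑' k, ENNReal.ofReal (t * gk T Ω k t) :=
              ENNReal.ofReal_tsum_of_nonneg
                (fun k => mul_nonneg (le_of_lt ht) (gk_nonneg k t))
                ((summable_gk hT hΩ t).mul_left t)
    _ = ∑' k, ∫⁻ t in Ioi (0:ℝ), ENNReal.ofReal (t * gk T Ω k t) := by
        apply MeasureTheory.lintegral_tsum
        intro k
        exact ((measurable_id.mul (cont_gk hT hΩ k).measurable).ennreal_ofReal).aemeasurable
    _ = ∑' k, ENNReal.ofReal (3 * cK k / (Ω^2 * (aK T Ω k)^2)) := by
        refine tsum_congr (fun k => ?_)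
        rw [← MeasureTheory.ofReal_integral_eq_lintegral_ofReal (integrable_t_gk hT hΩ k) ?_,
          integral_t_gk hT hΩ k]
        filter_upwards [MeasureTheory.ae_restrict_mem measurableSet_Ioi] with t ht
        exact mul_nonneg (le_of_lt ht) (gk_nonneg k t)
    _ ≤ ∑' k, ENNReal.ofReal (wB T Ω k) :=
        ENNReal.tsum_le_tsum (fun k => ENNReal.ofReal_le_ofReal (v_le_wB hT hΩ k))
    _ = ENNReal.ofReal (∑' k, wB T Ω k) :=
        (ENNReal.ofReal_tsum_of_nonneg (fun k => wB_nonneg k) summable_wB).symm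
    _ = ENNReal.ofReal (3 + Real.pi ^ 2 * T ^ 2 / Ω ^ 2) := by
        rw [tsum_wB hT hΩ]


end
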